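/- arXiv:2309.12887 — 3 statements merged into one kernel-verified Lean document; each statement's English description precedes it below -/
import Mathlib

section
/- Let |ψ⟩ be a unit vector in H^{⊗k} ⊗ K whose i-th marginal ρᵢ on H satisfies ⟨ψ₁^{(i)}|ρᵢ|ψ₁^{(i)}⟩ ≥ (1−εᵢ)² for unit vectors |ψ₁^{(i)}⟩ ∈ H, i = 1,…,k. Then there exist a unit vector |ψ'⟩ ∈ K such that ‖|ψ⟩⟨ψ| − |ψ₁^{(1)}⟩⟨ψ₁^{(1)}| ⊗ ⋯ ⊗ |ψ₁^{(k)}⟩⟨ψ₁^{(k)}| ⊗ |ψ'⟩⟨ψ'|‖₂ ≤ 2√(k·ε̄), where ε̄ = (1/k)Σᵢεᵢ. -/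
open Matrix BigOperators

/-- The outer product `|ψ⟩⟨ψ|`. -/
noncomputable def outer {ι : Type*} [Fintype ι] (ψ : ι → ℂ) : Matrix ι ι ℂ :=
  Matrix.vecMulVec ψ (star ψ)

/-- The Frobenius (Hilbert–Schmidt) norm `‖A‖₂ = √(Tr(A†A))`. -/
noncomputable def frobNorm {ι : Type*} [Fintype ι] (A : Matrix ι ι ℂ) : ℝ :=
  Real.sqrt ((Aᴴ * A).trace.re)

/-- The marginal (partial trace) of an operator on `H^{⊗k} ⊗ K` onto the `i`-th copy of `H`,
where `H = ℂ^d` and `K = ℂ^m`. -/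
noncomputable def marginalM {k d m : ℕ}
    (ρ : Matrix ((Fin k → Fin d) × Fin m) ((Fin k → Fin d) × Fin m) ℂ) (i : Fin k) :
    Matrix (Fin d) (Fin d) ℂ :=
  Matrix.of fun a b => ∑ f : Fin k → Fin d, ∑ y : Fin m,
    if f i = a then ρ (f, y) (Function.update f i b, y) else 0

/-- The product vector `|χ₁⟩ ⊗ ⋯ ⊗ |χ_k⟩ ⊗ |ψ'⟩` in `H^{⊗k} ⊗ K`. -/
noncomputable def prodVec {k d m : ℕ} (χ : Fin k → Fin d → ℂ) (ψ' : Fin m → ℂ) :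
    ((Fin k → Fin d) × Fin m) → ℂ :=
  fun fy => (∏ i, χ i (fy.1 i)) * ψ' fy.2

open Function

namespace CTP

variable {k d m : ℕ}

/-- slot-`i` projection onto `χ i`. -/
noncomputable def P (χ : Fin k → Fin d → ℂ) (i : Fin k)
    (g : (Fin k → Fin d) × Fin m → ℂ) : (Fin k → Fin d) × Fin m → ℂ :=
  fun fy => χ i (fy.1 i) * ∑ b, (starRingEnd ℂ) (χ i b) * g (Function.update fy.1 i b, fy.2)

noncomputable def Phi (χ : Fin k → Fin d → ℂ) (f : Fin k → Fin d) : ℂ := ∏ i, χ i (f i)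

noncomputable def cv (χ : Fin k → Fin d → ℂ) (g : (Fin k → Fin d) × Fin m → ℂ)
    (y : Fin m) : ℂ := ∑ f, (starRingEnd ℂ) (Phi χ f) * g (f, y)

noncomputable def Nn {ι : Type*} [Fintype ι] (g : ι → ℂ) : ℝ := ∑ x, Complex.normSq (g x)

lemma dot_star_self {ι : Type*} [Fintype ι] (v : ι → ℂ) :
    star v ⬝ᵥ v = (Nn v : ℝ) := by
  simp only [dotProduct, Pi.star_apply, Nn, Complex.ofReal_sum]
  exact Finset.sum_congr rfl fun x _ => by
    rw [Complex.normSq_eq_conj_mul_self]; rfl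

lemma Nn_nonneg {ι : Type*} [Fintype ι] (v : ι → ℂ) : 0 ≤ Nn v :=
  Finset.sum_nonneg fun x _ => Complex.normSq_nonneg _

/-- The involution `(b, f) ↦ (f i, update f i b)`. -/
def updEquiv (i : Fin k) : (Fin d × (Fin k → Fin d)) ≃ (Fin d × (Fin k → Fin d)) where
  toFun p := (p.2 i, Function.update p.2 i p.1)
  invFun p := (p.2 i, Function.update p.2 i p.1)
  left_inv p := by simp [Function.update_idem]
  right_inv p := by simp [Function.update_idem]

lemma sum_invol (i : Fin k) (F : Fin d → (Fin k → Fin d) → ℂ) :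
    (∑ p : Fin d × (Fin k → Fin d), F p.1 p.2) =
      ∑ p : Fin d × (Fin k → Fin d), F (p.2 i) (Function.update p.2 i p.1) :=
  Fintype.sum_equiv (updEquiv i) _ _ (fun p => by
    simp [updEquiv, Function.update_idem, Function.update_eq_self])

lemma adj (χ : Fin k → Fin d → ℂ) (i : Fin k) (u v : (Fin k → Fin d) × Fin m → ℂ) :
    star (P χ i u) ⬝ᵥ v = star u ⬝ᵥ P χ i v := by
  simp only [dotProduct, Pi.star_apply, P, Fintype.sum_prod_type, RCLike.star_def, _root_.map_mul,
    map_sum, Finset.sum_mul, Finset.mul_sum]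
  rw [Finset.sum_comm]
  conv_rhs => rw [Finset.sum_comm]
  refine Finset.sum_congr rfl fun y _ => ?_
  have hL : (∑ f : Fin k → Fin d, ∑ b : Fin d,
        (starRingEnd ℂ) (χ i (f i)) * ((starRingEnd ℂ) ((starRingEnd ℂ) (χ i b)) *
          (starRingEnd ℂ) (u (update f i b, y))) * v (f, y)) =
      ∑ p : Fin d × (Fin k → Fin d),
        (starRingEnd ℂ) (χ i (p.2 i)) * (χ i p.1 *
          (starRingEnd ℂ) (u (update p.2 i p.1, y))) * v (p.2, y) := by
    rw [Fintype.sum_prod_type, Finset.sum_comm]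
    simp [Complex.conj_conj]
  have hR : (∑ f : Fin k → Fin d, ∑ b : Fin d,
        (starRingEnd ℂ) (u (f, y)) * (χ i (f i) * ((starRingEnd ℂ) (χ i b) *
          v (update f i b, y)))) =
      ∑ p : Fin d × (Fin k → Fin d),
        (starRingEnd ℂ) (u (p.2, y)) * (χ i (p.2 i) * ((starRingEnd ℂ) (χ i p.1) *
          v (update p.2 i p.1, y))) := by
    rw [Fintype.sum_prod_type, Finset.sum_comm]
  rw [hL, hR, sum_invol i (fun b f => (starRingEnd ℂ) (u (f, y)) * (χ i (f i) *
    ((starRingEnd ℂ) (χ i b) * v (update f i b, y))))]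
  refine Finset.sum_congr rfl fun p _ => ?_
  simp only [Function.update_self, Function.update_idem, Function.update_eq_self]
  ring
lemma chi_sum {χ : Fin k → Fin d → ℂ} (i : Fin k) (hχ : star (χ i) ⬝ᵥ χ i = 1) :
    (∑ b, (starRingEnd ℂ) (χ i b) * χ i b) = 1 := by
  simpa [dotProduct, Pi.star_apply, RCLike.star_def] using hχ

lemma idem {χ : Fin k → Fin d → ℂ} (i : Fin k) (hχ : star (χ i) ⬝ᵥ χ i = 1)
    (g : (Fin k → Fin d) × Fin m → ℂ) : P χ i (P χ i g) = P χ i g := by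
  funext fy
  simp only [P, Function.update_self, Function.update_idem]
  rw [show (∑ b, (starRingEnd ℂ) (χ i b) * (χ i b *
      ∑ b', (starRingEnd ℂ) (χ i b') * g (update fy.1 i b', fy.2))) =
    (∑ b, (starRingEnd ℂ) (χ i b) * χ i b) *
      ∑ b', (starRingEnd ℂ) (χ i b') * g (update fy.1 i b', fy.2) by
      rw [Finset.sum_mul]; exact Finset.sum_congr rfl fun b _ => by ring]
  rw [chi_sum i hχ, one_mul]

lemma expandPP {χ : Fin k → Fin d → ℂ} {i j : Fin k} (hij : i ≠ j)
    (g : (Fin k → Fin d) × Fin m → ℂ) (fy : (Fin k → Fin d) × Fin m) :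
    P χ i (P χ j g) fy = ∑ b, ∑ b', χ i (fy.1 i) * χ j (fy.1 j) *
      ((starRingEnd ℂ) (χ i b) * (starRingEnd ℂ) (χ j b') *
        g (Function.update (Function.update fy.1 i b) j b', fy.2)) := by
  simp only [P, Function.update_of_ne hij.symm, Finset.mul_sum]
  refine Finset.sum_congr rfl fun b _ => ?_
  refine Finset.sum_congr rfl fun b' _ => ?_
  ring

lemma comm {χ : Fin k → Fin d → ℂ} {i j : Fin k} (hij : i ≠ j)
    (g : (Fin k → Fin d) × Fin m → ℂ) : P χ i (P χ j g) = P χ j (P χ i g) := by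
  funext fy
  rw [expandPP hij g fy, expandPP hij.symm g fy, Finset.sum_comm]
  refine Finset.sum_congr rfl fun b _ => Finset.sum_congr rfl fun b' _ => ?_
  rw [Function.update_comm hij]
  ring

lemma self_dot (χ : Fin k → Fin d → ℂ) (i : Fin k) (hχ : star (χ i) ⬝ᵥ χ i = 1)
    (g : (Fin k → Fin d) × Fin m → ℂ) :
    star g ⬝ᵥ P χ i g = (Nn (P χ i g) : ℝ) := by
  have h1 : star (P χ i g) ⬝ᵥ P χ i g = star g ⬝ᵥ P χ i (P χ i g) := adj χ i g (P χ i g)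
  rw [idem i hχ] at h1
  rw [← h1, dot_star_self]

lemma pyth (χ : Fin k → Fin d → ℂ) (i : Fin k) (hχ : star (χ i) ⬝ᵥ χ i = 1)
    (g : (Fin k → Fin d) × Fin m → ℂ) :
    Nn (g - P χ i g) = Nn g - Nn (P χ i g) := by
  have e1 : star (g - P χ i g) ⬝ᵥ (g - P χ i g) =
      star g ⬝ᵥ g - star (P χ i g) ⬝ᵥ (P χ i g) := by
    have hgP : star g ⬝ᵥ P χ i g = star (P χ i g) ⬝ᵥ (P χ i g) := by
      rw [self_dot χ i hχ, dot_star_self]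
    have hPg : star (P χ i g) ⬝ᵥ g = star (P χ i g) ⬝ᵥ (P χ i g) := by
      rw [adj χ i g g]; exact hgP
    rw [star_sub, sub_dotProduct, dotProduct_sub, dotProduct_sub,
      hgP, hPg]
    ring
  rw [dot_star_self, dot_star_self, dot_star_self] at e1
  exact_mod_cast e1

lemma contraction (χ : Fin k → Fin d → ℂ) (i : Fin k) (hχ : star (χ i) ⬝ᵥ χ i = 1)
    (g : (Fin k → Fin d) × Fin m → ℂ) : Nn (P χ i g) ≤ Nn g := by
  have := pyth χ i hχ g
  have h0 := Nn_nonneg (g - P χ i g)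
  linarith

lemma Phi_update (χ : Fin k → Fin d → ℂ) (i : Fin k) (f : Fin k → Fin d) (b : Fin d) :
    Phi χ (Function.update f i b) = χ i b * ∏ j ∈ {i}ᶜ, χ j (f j) := by
  rw [Phi, Fintype.prod_eq_mul_prod_compl i, Function.update_self]
  congr 1
  refine Finset.prod_congr rfl fun j hj => ?_
  rw [Function.update_of_ne (by simpa using hj)]

lemma Phi_eq (χ : Fin k → Fin d → ℂ) (i : Fin k) (f : Fin k → Fin d) :
    Phi χ f = χ i (f i) * ∏ j ∈ {i}ᶜ, χ j (f j) := by
  conv_lhs => rw [show f = Function.update f i (f i) from (Function.update_eq_self i f).symm]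
  rw [Phi_update]

lemma fix_vec (χ : Fin k → Fin d → ℂ) (i : Fin k) (hχ : star (χ i) ⬝ᵥ χ i = 1)
    (u : Fin m → ℂ) :
    P χ i (fun fy => Phi χ fy.1 * u fy.2) = fun fy => Phi χ fy.1 * u fy.2 := by
  funext fy
  simp only [P, Phi_update]
  rw [show (∑ b, (starRingEnd ℂ) (χ i b) * (χ i b * (∏ j ∈ {i}ᶜ, χ j (fy.1 j)) * u fy.2)) =
      (∑ b, (starRingEnd ℂ) (χ i b) * χ i b) * ((∏ j ∈ {i}ᶜ, χ j (fy.1 j)) * u fy.2) by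
    rw [Finset.sum_mul]; exact Finset.sum_congr rfl fun b _ => by ring]
  rw [chi_sum i hχ, one_mul, Phi_eq χ i fy.1]
  ring

lemma cv_P (χ : Fin k → Fin d → ℂ) (i : Fin k) (hχ : star (χ i) ⬝ᵥ χ i = 1)
    (g : (Fin k → Fin d) × Fin m → ℂ) : cv χ (P χ i g) = cv χ g := by
  funext y
  have he : ∀ v : (Fin k → Fin d) × Fin m → ℂ, cv χ v y =
      star (fun fy : (Fin k → Fin d) × Fin m => Phi χ fy.1 * (if fy.2 = y then (1:ℂ) else 0)) ⬝ᵥ v := by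
    intro v
    simp only [cv, dotProduct, Pi.star_apply, Fintype.sum_prod_type, RCLike.star_def,
      _root_.map_mul]
    refine Finset.sum_congr rfl fun f _ => ?_
    rw [Finset.sum_eq_single y]
    · simp
    · intro y' _ hy'; simp [hy']
    · intro hy; simp at hy
  rw [he, he, ← adj χ i (fun fy => Phi χ fy.1 * if fy.2 = y then (1:ℂ) else 0) g,
    fix_vec χ i hχ (fun y' => if y' = y then (1:ℂ) else 0)]

lemma cv_sub (χ : Fin k → Fin d → ℂ) (g h : (Fin k → Fin d) × Fin m → ℂ) :
    cv χ (g - h) = cv χ g - cv χ h := by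
  funext y; simp [cv, mul_sub, Finset.sum_sub_distrib]

noncomputable def AL (χ : Fin k → Fin d → ℂ) :
    List (Fin k) → ((Fin k → Fin d) × Fin m → ℂ) → ((Fin k → Fin d) × Fin m → ℂ)
  | [], g => g
  | (i :: L), g => P χ i (AL χ L g)

lemma P_sub (χ : Fin k → Fin d → ℂ) (i : Fin k) (g h : (Fin k → Fin d) × Fin m → ℂ) :
    P χ i (g - h) = P χ i g - P χ i h := by
  funext fy
  simp [P, mul_sub, Finset.sum_sub_distrib]

lemma AL_sub (χ : Fin k → Fin d → ℂ) (L : List (Fin k))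
    (g h : (Fin k → Fin d) × Fin m → ℂ) : AL χ L (g - h) = AL χ L g - AL χ L h := by
  induction L with
  | nil => rfl
  | cons i L ih => simp only [AL, ih, P_sub]

lemma comm_list (χ : Fin k → Fin d → ℂ) {i : Fin k} {L : List (Fin k)} (hi : i ∉ L)
    (g : (Fin k → Fin d) × Fin m → ℂ) : P χ i (AL χ L g) = AL χ L (P χ i g) := by
  induction L with
  | nil => rfl
  | cons j L ih =>
    simp only [AL]
    have hij : i ≠ j := by rintro rfl; exact hi List.mem_cons_self
    rw [comm hij, ih (fun hm => hi (List.mem_cons_of_mem j hm))]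

lemma contr_list (χ : Fin k → Fin d → ℂ) (hχ : ∀ i, star (χ i) ⬝ᵥ χ i = 1)
    (L : List (Fin k)) (g : (Fin k → Fin d) × Fin m → ℂ) : Nn (AL χ L g) ≤ Nn g := by
  induction L with
  | nil => exact le_refl _
  | cons i L ih => exact le_trans (contraction χ i (hχ i) _) ih

lemma fixed_mem (χ : Fin k → Fin d → ℂ) (hχ : ∀ i, star (χ i) ⬝ᵥ χ i = 1)
    {i : Fin k} {L : List (Fin k)} (hi : i ∈ L) (hnd : L.Nodup)
    (g : (Fin k → Fin d) × Fin m → ℂ) : P χ i (AL χ L g) = AL χ L g := by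
  induction L with
  | nil => simp at hi
  | cons j L ih =>
    rcases List.mem_cons.1 hi with h1 | h2
    · subst h1; exact idem i (hχ i) _
    · have hij : i ≠ j := fun he => ((List.nodup_cons.1 hnd).1 (he ▸ h2)).elim
      simp only [AL]
      rw [comm hij, ih h2 (List.nodup_cons.1 hnd).2]

lemma cv_AL (χ : Fin k → Fin d → ℂ) (hχ : ∀ i, star (χ i) ⬝ᵥ χ i = 1)
    (L : List (Fin k)) (g : (Fin k → Fin d) × Fin m → ℂ) : cv χ (AL χ L g) = cv χ g := by
  induction L with
  | nil => rfl
  | cons i L ih => rw [AL, cv_P χ i (hχ i), ih]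

lemma union_bound (χ : Fin k → Fin d → ℂ) (hχ : ∀ i, star (χ i) ⬝ᵥ χ i = 1) :
    ∀ (L : List (Fin k)), L.Nodup → ∀ (g : (Fin k → Fin d) × Fin m → ℂ),
    Nn g - Nn (AL χ L g) ≤ (L.map (fun i => Nn g - Nn (P χ i g))).sum := by
  intro L
  induction L with
  | nil => intro _ g; simp [AL]
  | cons i L ih =>
    intro hnd g
    have hiL : i ∉ L := (List.nodup_cons.1 hnd).1
    have key : Nn (AL χ L g) - Nn (P χ i (AL χ L g)) ≤ Nn g - Nn (P χ i g) := by
      rw [← pyth χ i (hχ i) (AL χ L g), ← pyth χ i (hχ i) g]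
      calc Nn (AL χ L g - P χ i (AL χ L g))
          = Nn (AL χ L (g - P χ i g)) := by rw [comm_list χ hiL, ← AL_sub]
        _ ≤ Nn (g - P χ i g) := contr_list χ hχ _ _
    have := ih (List.nodup_cons.1 hnd).2 g
    simp only [AL, List.map_cons, List.sum_cons]
    linarith

lemma upd1 {χ : Fin k → Fin d → ℂ} {v : (Fin k → Fin d) × Fin m → ℂ}
    (hv : ∀ i, P χ i v = v) (i : Fin k) (f : Fin k → Fin d) (b : Fin d) (y : Fin m) :
    χ i b * v (f, y) = χ i (f i) * v (Function.update f i b, y) := by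
  have h1 := congrFun (hv i) (f, y)
  have h2 := congrFun (hv i) (Function.update f i b, y)
  simp only [P, Function.update_self, Function.update_idem] at h1 h2
  rw [← h1, ← h2]
  ring

lemma rank1_aux {χ : Fin k → Fin d → ℂ} {v : (Fin k → Fin d) × Fin m → ℂ}
    (hv : ∀ i, P χ i v = v) (y : Fin m) (s : Finset (Fin k)) :
    ∀ f f' : Fin k → Fin d, (∀ j ∉ s, f j = f' j) →
      Phi χ f' * v (f, y) = Phi χ f * v (f', y) := by
  induction s using Finset.induction with
  | empty =>
    intro f f' hag
    have : f = f' := funext fun j => hag j (Finset.notMem_empty j)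
    rw [this]
  | @insert i s hni ih =>
    intro f f' hag
    set f'' := Function.update f' i (f i) with hf''
    have hag2 : ∀ j ∉ s, f j = f'' j := by
      intro j hj
      by_cases hji : j = i
      · subst hji; simp [hf'']
      · rw [hf'', Function.update_of_ne hji]
        exact hag j (by simp [hj, hji])
    have ihu := ih f f'' hag2
    have hupd : χ i (f' i) * v (f'', y) = χ i (f i) * v (f', y) := by
      have := upd1 hv i f'' (f' i) y
      rw [hf''] at this ⊢
      simpa [Function.update_idem, Function.update_eq_self] using this
    by_cases hz : χ i (f i) = 0
    · have hvf : v (f, y) = 0 := by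
        have h1 := congrFun (hv i) (f, y)
        simp only [P] at h1
        rw [← h1, hz, zero_mul]
      have hPf : Phi χ f = 0 := by
        rw [Phi_eq χ i f, hz, zero_mul]
      rw [hvf, hPf, mul_zero, zero_mul]
    · have hPf' : Phi χ f' = χ i (f' i) * ∏ j ∈ {i}ᶜ, χ j (f' j) := Phi_eq χ i f'
      have hPf'' : Phi χ f'' = χ i (f i) * ∏ j ∈ {i}ᶜ, χ j (f' j) := by
        rw [hf'', Phi_update]
      apply mul_left_cancel₀ hz
      calc χ i (f i) * (Phi χ f' * v (f, y))
          = χ i (f' i) * (Phi χ f'' * v (f, y)) := by rw [hPf', hPf'']; ring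
        _ = χ i (f' i) * (Phi χ f * v (f'', y)) := by rw [ihu]
        _ = Phi χ f * (χ i (f' i) * v (f'', y)) := by ring
        _ = Phi χ f * (χ i (f i) * v (f', y)) := by rw [hupd]
        _ = χ i (f i) * (Phi χ f * v (f', y)) := by ring

lemma normPhi (χ : Fin k → Fin d → ℂ) (hχ : ∀ i, star (χ i) ⬝ᵥ χ i = 1) :
    (∑ f : Fin k → Fin d, (starRingEnd ℂ) (Phi χ f) * Phi χ f) = 1 := by
  have : ∀ f : Fin k → Fin d, (starRingEnd ℂ) (Phi χ f) * Phi χ f =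
      ∏ i, (starRingEnd ℂ) (χ i (f i)) * χ i (f i) := by
    intro f
    rw [Phi, map_prod, ← Finset.prod_mul_distrib]
  rw [Finset.sum_congr rfl fun f _ => this f,
    ← Fintype.prod_sum (fun (i : Fin k) (b : Fin d) => (starRingEnd ℂ) (χ i b) * χ i b)]
  rw [Finset.prod_congr rfl fun i _ => chi_sum i (hχ i)]
  simp

lemma form {χ : Fin k → Fin d → ℂ} {v : (Fin k → Fin d) × Fin m → ℂ}
    (hχ : ∀ i, star (χ i) ⬝ᵥ χ i = 1) (hv : ∀ i, P χ i v = v) :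
    v = fun fy => Phi χ fy.1 * cv χ v fy.2 := by
  funext fy
  obtain ⟨f, y⟩ := fy
  calc v (f, y) = (∑ f' : Fin k → Fin d, (starRingEnd ℂ) (Phi χ f') * Phi χ f') * v (f, y) := by
        rw [normPhi χ hχ, one_mul]
    _ = ∑ f', (starRingEnd ℂ) (Phi χ f') * (Phi χ f' * v (f, y)) := by
        rw [Finset.sum_mul]; exact Finset.sum_congr rfl fun f' _ => by ring
    _ = ∑ f', (starRingEnd ℂ) (Phi χ f') * (Phi χ f * v (f', y)) := by
        refine Finset.sum_congr rfl fun f' _ => ?_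
        rw [rank1_aux hv y Finset.univ f f' (fun j hj => (hj (Finset.mem_univ j)).elim)]
    _ = Phi χ f * cv χ v y := by
        rw [cv, Finset.mul_sum]; exact Finset.sum_congr rfl fun f' _ => by ring

lemma marg (χ : Fin k → Fin d → ℂ) (i : Fin k) (ψ : (Fin k → Fin d) × Fin m → ℂ) :
    star (χ i) ⬝ᵥ (marginalM (outer ψ) i *ᵥ χ i) = (starRingEnd ℂ) (star ψ ⬝ᵥ P χ i ψ) := by
  have L1 : star (χ i) ⬝ᵥ (marginalM (outer ψ) i *ᵥ χ i) =
      ∑ a, ∑ b, ∑ f : Fin k → Fin d, ∑ y : Fin m, (if f i = a then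
        (starRingEnd ℂ) (χ i a) * χ i b * ψ (f, y) *
          (starRingEnd ℂ) (ψ (Function.update f i b, y)) else 0) := by
    simp only [dotProduct, Matrix.mulVec, marginalM, outer, Matrix.of_apply,
      Matrix.vecMulVec_apply, Pi.star_apply, RCLike.star_def, Finset.mul_sum,
      Finset.sum_mul, mul_ite, ite_mul, mul_zero, zero_mul]
    refine Finset.sum_congr rfl fun a _ => Finset.sum_congr rfl fun b _ =>
      Finset.sum_congr rfl fun f _ => Finset.sum_congr rfl fun y _ => ?_
    split
    · ring
    · rfl
  rw [L1]
  rw [Finset.sum_comm]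
  have L2 : ∀ b, (∑ a, ∑ f : Fin k → Fin d, ∑ y : Fin m, (if f i = a then
      (starRingEnd ℂ) (χ i a) * χ i b * ψ (f, y) *
        (starRingEnd ℂ) (ψ (Function.update f i b, y)) else 0)) =
      ∑ f : Fin k → Fin d, ∑ y : Fin m,
        (starRingEnd ℂ) (χ i (f i)) * χ i b * ψ (f, y) *
          (starRingEnd ℂ) (ψ (Function.update f i b, y)) := by
    intro b
    rw [Finset.sum_comm]
    refine Finset.sum_congr rfl fun f _ => ?_
    rw [Finset.sum_comm]
    refine Finset.sum_congr rfl fun y _ => ?_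
    simp [Finset.sum_ite_eq]
  rw [Finset.sum_congr rfl fun b _ => L2 b]
  have R1 : (starRingEnd ℂ) (star ψ ⬝ᵥ P χ i ψ) =
      ∑ f : Fin k → Fin d, ∑ y : Fin m, ∑ b,
        (starRingEnd ℂ) (χ i (f i)) * χ i b * ψ (f, y) *
          (starRingEnd ℂ) (ψ (Function.update f i b, y)) := by
    simp only [dotProduct, P, Pi.star_apply, RCLike.star_def, map_sum, _root_.map_mul,
      Complex.conj_conj, Fintype.sum_prod_type, Finset.mul_sum]
    refine Finset.sum_congr rfl fun f _ => Finset.sum_congr rfl fun y _ =>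
      Finset.sum_congr rfl fun b _ => ?_
    ring
  rw [R1, Finset.sum_comm]
  refine Finset.sum_congr rfl fun f _ => Finset.sum_comm
lemma trace_outer_sub {ι : Type*} [Fintype ι] (u v : ι → ℂ) :
    ((outer u - outer v)ᴴ * (outer u - outer v)).trace =
      (((Nn u : ℂ))^2 + (Nn v : ℂ)^2 - 2 * Complex.normSq (star v ⬝ᵥ u)) := by
  have expand : ((outer u - outer v)ᴴ * (outer u - outer v)).trace =
      ∑ x, ∑ z, ((starRingEnd ℂ) (u z) * u z * (u x * (starRingEnd ℂ) (u x))
        - ((starRingEnd ℂ) (u z) * v z) * (u x * (starRingEnd ℂ) (v x))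
        - ((starRingEnd ℂ) (v z) * u z) * (v x * (starRingEnd ℂ) (u x))
        + (starRingEnd ℂ) (v z) * v z * (v x * (starRingEnd ℂ) (v x))) := by
    simp only [Matrix.trace, Matrix.diag_apply, Matrix.mul_apply,
      Matrix.conjTranspose_apply, Matrix.sub_apply, outer, Matrix.vecMulVec_apply,
      Pi.star_apply, RCLike.star_def, star_sub, _root_.map_mul, Complex.conj_conj]
    refine Finset.sum_congr rfl fun x _ => Finset.sum_congr rfl fun z _ => ?_
    ring
  rw [expand]
  simp only [Finset.sum_sub_distrib, Finset.sum_add_distrib, ← Finset.sum_mul, ← Finset.mul_sum]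
  have h1 : (∑ z, (starRingEnd ℂ) (u z) * u z) = (Nn u : ℝ) := by
    rw [← dot_star_self]; rfl
  have h2 : (∑ z, (starRingEnd ℂ) (v z) * v z) = (Nn v : ℝ) := by
    rw [← dot_star_self]; rfl
  have h3 : (∑ z, (starRingEnd ℂ) (v z) * u z) = star v ⬝ᵥ u := rfl
  have h4 : (∑ z, (starRingEnd ℂ) (u z) * v z) = (starRingEnd ℂ) (star v ⬝ᵥ u) := by
    rw [dotProduct, map_sum]
    exact Finset.sum_congr rfl fun z _ => by simp [Pi.star_apply]; ring
  have h5 : ∀ w : ι → ℂ, (∑ x, w x * (starRingEnd ℂ) (w x)) = (starRingEnd ℂ) (∑ x, (starRingEnd ℂ) (w x) * w x) := by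
    intro w; rw [map_sum]; exact Finset.sum_congr rfl fun x _ => by rw [_root_.map_mul, Complex.conj_conj]
  have h6 : (∑ x, u x * (starRingEnd ℂ) (v x)) = star v ⬝ᵥ u := by
    rw [dotProduct]
    exact Finset.sum_congr rfl fun x _ => by simp [Pi.star_apply, mul_comm]
  have h7 : (∑ x, v x * (starRingEnd ℂ) (u x)) = (starRingEnd ℂ) (star v ⬝ᵥ u) := by
    rw [dotProduct, map_sum]
    refine Finset.sum_congr rfl fun x _ => ?_
    simp only [Pi.star_apply, RCLike.star_def, _root_.map_mul, Complex.conj_conj]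
    try ring
  rw [h5 u, h5 v, h1, h2, h3, h4, h6, h7, Complex.conj_ofReal, Complex.conj_ofReal]
  rw [Complex.mul_conj, mul_comm ((starRingEnd ℂ) (star v ⬝ᵥ u)) (star v ⬝ᵥ u), Complex.mul_conj]
  ring


lemma NnPhi (χ : Fin k → Fin d → ℂ) (hχ : ∀ i, star (χ i) ⬝ᵥ χ i = 1) :
    (∑ f : Fin k → Fin d, Complex.normSq (Phi χ f)) = 1 := by
  have h := normPhi χ hχ
  have h2 : (∑ f : Fin k → Fin d, (Complex.normSq (Phi χ f) : ℂ)) = 1 := by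
    rw [← h]
    exact Finset.sum_congr rfl fun f _ => by
      rw [Complex.normSq_eq_conj_mul_self]
  exact_mod_cast h2

lemma Nn_prod (χ : Fin k → Fin d → ℂ) (u : Fin m → ℂ) :
    Nn (fun fy : (Fin k → Fin d) × Fin m => Phi χ fy.1 * u fy.2) =
      (∑ f : Fin k → Fin d, Complex.normSq (Phi χ f)) * Nn u := by
  rw [Nn, Nn, Fintype.sum_prod_type, Finset.sum_mul_sum]
  exact Finset.sum_congr rfl fun f _ => Finset.sum_congr rfl fun y _ =>
    Complex.normSq_mul _ _

lemma frob_re {ι : Type*} [Fintype ι] (u v : ι → ℂ) :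
    frobNorm (outer u - outer v) =
      Real.sqrt ((Nn u)^2 + (Nn v)^2 - 2 * Complex.normSq (star v ⬝ᵥ u)) := by
  rw [frobNorm, trace_outer_sub]
  congr 1
  rw [show (((Nn u : ℝ)) : ℂ)^2 + ((Nn v : ℝ) : ℂ)^2 -
      2 * (Complex.normSq (star v ⬝ᵥ u) : ℂ) =
      ((((Nn u)^2 + (Nn v)^2 - 2 * Complex.normSq (star v ⬝ᵥ u) : ℝ)) : ℂ) by
    push_cast; ring]
  exact Complex.ofReal_re _

end CTP

/-- If the `i`-th marginal `ρᵢ` of a pure state `|ψ⟩ ∈ H^{⊗k} ⊗ K` satisfies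
`⟨ψ₁⁽ⁱ⁾|ρᵢ|ψ₁⁽ⁱ⁾⟩ ≥ (1−εᵢ)²` for unit vectors `|ψ₁⁽ⁱ⁾⟩`, then there is a unit `|ψ'⟩ ∈ K` with
`‖|ψ⟩⟨ψ| − |ψ₁⁽¹⁾⟩⟨ψ₁⁽¹⁾| ⊗ ⋯ ⊗ |ψ₁⁽ᵏ⁾⟩⟨ψ₁⁽ᵏ⁾| ⊗ |ψ'⟩⟨ψ'|‖₂ ≤ 2√(k ε̄)` where
`ε̄ = (1/k) Σᵢ εᵢ`. -/
theorem close_to_product {k d m : ℕ} (hk : 0 < k)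
    (ψ : ((Fin k → Fin d) × Fin m) → ℂ) (hψ : star ψ ⬝ᵥ ψ = 1)
    (χ : Fin k → Fin d → ℂ) (hχ : ∀ i, star (χ i) ⬝ᵥ χ i = 1)
    (ε : Fin k → ℝ) (hε : ∀ i, ε i ∈ Set.Icc (0 : ℝ) 1)
    (h : ∀ i, (1 - ε i) ^ 2 ≤ (star (χ i) ⬝ᵥ (marginalM (outer ψ) i *ᵥ χ i)).re) :
    ∃ ψ' : Fin m → ℂ, star ψ' ⬝ᵥ ψ' = 1 ∧
      frobNorm (outer ψ - outer (prodVec χ ψ')) ≤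
        2 * Real.sqrt (k * ((∑ i, ε i) / k)) := by
  classical
  have hNψ : CTP.Nn ψ = 1 := by
    have h0 := hψ
    rw [CTP.dot_star_self] at h0
    exact_mod_cast h0
  have hm0 : 0 < m := by
    rcases Nat.eq_zero_or_pos m with hm | hm
    · exfalso
      subst hm
      have : CTP.Nn ψ = 0 := by
        rw [CTP.Nn, Fintype.sum_prod_type]
        simp
      rw [this] at hNψ
      norm_num at hNψ
    · exact hm
  set L := List.finRange k with hL
  set Q := CTP.AL χ L ψ with hQdef
  have hfix : ∀ i, CTP.P χ i Q = Q := fun i =>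
    CTP.fixed_mem χ hχ (List.mem_finRange i) (List.nodup_finRange k) ψ
  set c := CTP.cv χ ψ with hcdef
  have hform : Q = fun fy => CTP.Phi χ fy.1 * c fy.2 := by
    rw [hcdef, ← CTP.cv_AL χ hχ L ψ]
    exact CTP.form hχ hfix
  have hNPhi := CTP.NnPhi χ hχ
  have hNQ : CTP.Nn Q = CTP.Nn c := by
    rw [hform, CTP.Nn_prod, hNPhi, one_mul]
  -- union bound
  have hub : CTP.Nn ψ - CTP.Nn Q ≤ ∑ i, (CTP.Nn ψ - CTP.Nn (CTP.P χ i ψ)) := by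
    have h1 := CTP.union_bound χ hχ L (List.nodup_finRange k) ψ
    rw [Fin.sum_univ_def]
    exact h1
  have hterm : ∀ i, CTP.Nn ψ - CTP.Nn (CTP.P χ i ψ) ≤ 2 * ε i := by
    intro i
    have hm2 := CTP.marg χ i ψ
    have hre : (star (χ i) ⬝ᵥ (marginalM (outer ψ) i *ᵥ χ i)).re = CTP.Nn (CTP.P χ i ψ) := by
      rw [hm2, CTP.self_dot χ i (hχ i) ψ, Complex.conj_ofReal, Complex.ofReal_re]
    have h2 := h i
    rw [hre] at h2
    have hε1 := (hε i).1
    nlinarith [sq_nonneg (ε i)]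
  have hsum : CTP.Nn ψ - CTP.Nn Q ≤ 2 * (∑ i, ε i) := by
    calc CTP.Nn ψ - CTP.Nn Q ≤ ∑ i, (CTP.Nn ψ - CTP.Nn (CTP.P χ i ψ)) := hub
      _ ≤ ∑ i, 2 * ε i := Finset.sum_le_sum fun i _ => hterm i
      _ = 2 * ∑ i, ε i := by rw [Finset.mul_sum]
  have hNc : 1 - 2 * (∑ i, ε i) ≤ CTP.Nn c := by
    rw [← hNQ]; linarith
  have hEnn : 0 ≤ ∑ i, ε i := Finset.sum_nonneg fun i _ => (hε i).1
  have hrhs : 2 * Real.sqrt ((k : ℝ) * ((∑ i, ε i) / k)) = 2 * Real.sqrt (∑ i, ε i) := by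
    congr 2
    field_simp
  rw [hrhs]
  -- key: a good unit vector ψ' with normSq overlap ≥ 1 - 2 Σε or trivial bound
  have key : ∀ ψ' : Fin m → ℂ, CTP.Nn ψ' = 1 →
      2 - 2 * Complex.normSq (star (prodVec χ ψ') ⬝ᵥ ψ) ≤ 4 * (∑ i, ε i) →
      frobNorm (outer ψ - outer (prodVec χ ψ')) ≤ 2 * Real.sqrt (∑ i, ε i) := by
    intro ψ' hunit hbound
    have hprodeq : prodVec χ ψ' = fun fy : (Fin k → Fin d) × Fin m =>
        CTP.Phi χ fy.1 * ψ' fy.2 := rfl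
    have hNv : CTP.Nn (prodVec χ ψ') = 1 := by
      rw [hprodeq, CTP.Nn_prod, hNPhi, one_mul, hunit]
    rw [CTP.frob_re, hNψ, hNv]
    calc Real.sqrt (1 ^ 2 + 1 ^ 2 - 2 * Complex.normSq (star (prodVec χ ψ') ⬝ᵥ ψ))
        ≤ Real.sqrt (4 * (∑ i, ε i)) := by
          apply Real.sqrt_le_sqrt
          nlinarith [hbound]
      _ = 2 * Real.sqrt (∑ i, ε i) := by
          rw [show (4 : ℝ) = 2 ^ 2 by norm_num, Real.sqrt_mul (by positivity), Real.sqrt_sq (by norm_num)]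
  by_cases hc0 : CTP.Nn c = 0
  · -- trivial case
    have hε2 : (1 : ℝ) ≤ 2 * (∑ i, ε i) := by rw [hc0] at hNc; linarith
    set y0 : Fin m := ⟨0, hm0⟩
    set ψ' : Fin m → ℂ := fun y => if y = y0 then 1 else 0 with hψ'
    have hunit : CTP.Nn ψ' = 1 := by
      rw [CTP.Nn, hψ']
      rw [Finset.sum_eq_single y0]
      · simp
      · intro y _ hy; simp [hy]
      · intro hy; exact absurd (Finset.mem_univ y0) hy
    refine ⟨ψ', ?_, ?_⟩
    · rw [CTP.dot_star_self, hunit]; norm_num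
    · apply key ψ' hunit
      have := Complex.normSq_nonneg (star (prodVec χ ψ') ⬝ᵥ ψ)
      linarith
  · -- main case
    have hNcpos : 0 < CTP.Nn c := lt_of_le_of_ne (CTP.Nn_nonneg c) (Ne.symm hc0)
    set r : ℝ := Real.sqrt (CTP.Nn c) with hr
    have hrpos : 0 < r := Real.sqrt_pos.2 hNcpos
    have hrr : r * r = CTP.Nn c := Real.mul_self_sqrt hNcpos.le
    set ψ' : Fin m → ℂ := fun y => c y / (r : ℂ) with hψ'
    have hnr : Complex.normSq ((r : ℝ) : ℂ) = CTP.Nn c := by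
      rw [Complex.normSq_ofReal]; exact hrr
    have hunit : CTP.Nn ψ' = 1 := by
      rw [CTP.Nn]
      have he : ∀ y, Complex.normSq (ψ' y) = Complex.normSq (c y) / CTP.Nn c := fun y => by
        rw [hψ', Complex.normSq_div, hnr]
      rw [Finset.sum_congr rfl fun y _ => he y, ← Finset.sum_div]
      rw [show (∑ y, Complex.normSq (c y)) = CTP.Nn c from rfl]
      field_simp
    refine ⟨ψ', by rw [CTP.dot_star_self, hunit]; norm_num, ?_⟩
    apply key ψ' hunit
    have hs1 : star (prodVec χ ψ') ⬝ᵥ ψ = ∑ y, (starRingEnd ℂ) (ψ' y) * c y := by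
      simp only [dotProduct, Pi.star_apply, prodVec, RCLike.star_def, _root_.map_mul,
        Fintype.sum_prod_type]
      rw [Finset.sum_comm]
      refine Finset.sum_congr rfl fun y _ => ?_
      rw [hcdef, CTP.cv, Finset.mul_sum]
      refine Finset.sum_congr rfl fun f _ => ?_
      rw [CTP.Phi]
      ring
    have hs2 : star (prodVec χ ψ') ⬝ᵥ ψ = ((CTP.Nn c / r : ℝ) : ℂ) := by
      rw [hs1]
      have he : ∀ y, (starRingEnd ℂ) (ψ' y) * c y = (Complex.normSq (c y) : ℂ) / (r : ℂ) := by
        intro y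
        rw [hψ', map_div₀, Complex.conj_ofReal]
        rw [div_mul_eq_mul_div, ← Complex.normSq_eq_conj_mul_self]
      rw [Finset.sum_congr rfl fun y _ => he y, ← Finset.sum_div]
      rw [show (∑ y, (Complex.normSq (c y) : ℂ)) = ((CTP.Nn c : ℝ) : ℂ) by
        rw [CTP.Nn]; push_cast; rfl]
      push_cast
      rfl
    have hs3 : Complex.normSq (star (prodVec χ ψ') ⬝ᵥ ψ) = CTP.Nn c := by
      rw [hs2, Complex.normSq_ofReal, div_mul_div_comm, hrr]
      exact mul_div_cancel_left₀ _ hc0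
    rw [hs3]
    linarith
end

section
/- Define Ψ : L(H ⊗ Q) → L(Q_⊥) by Ψ(ρ) = ⟨0|(Φ⊗Tr)(ρ)|0⟩·μ_Q + ⟨1|(Φ⊗Tr)(ρ)|1⟩·|⊥⟩⟨⊥| where Φ : L(H) → L(Q) is a channel, μ_Q the maximally mixed state on the qubit Q, and |⊥⟩ orthogonal to Q. Then for any density operator ρ on H and any states σ, σ' on Q: Tr(Ψ(ρ⊗σ)Ψ(ρ⊗σ')) = (1/2)(1 − ⟨1|Φ(ρ)|1⟩)² + ⟨1|Φ(ρ)|1⟩². In particular, if ⟨1|Φ(ρ)|1⟩ ≥ 3/4 then this overlap is ≥ 19/32, and if ⟨1|Φ(ρ)|1⟩ ≤ 2/3 then it is ≤ 1/2. -/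
open Matrix BigOperators ComplexOrder Kronecker

/-- A density operator: positive semidefinite with trace 1. -/
def IsDensity {ι : Type*} [Fintype ι] (ρ : Matrix ι ι ℂ) : Prop :=
  ρ.PosSemidef ∧ ρ.trace = 1

/-- A quantum channel (completely positive trace-preserving map), presented via a
Kraus decomposition. -/
def IsCPTP {ι κ : Type*} [Fintype ι] [DecidableEq ι] [Fintype κ]
    (Φ : Matrix ι ι ℂ → Matrix κ κ ℂ) : Prop :=
  ∃ (r : ℕ) (K : Fin r → Matrix κ ι ℂ),
    (∀ ρ, Φ ρ = ∑ i, K i * ρ * (K i)ᴴ) ∧ (∑ i, (K i)ᴴ * K i = 1)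

/-- The partial trace over the qubit factor of an operator on `H ⊗ Q`. -/
noncomputable def trQ {n : ℕ} (ρ : Matrix (Fin n × Fin 2) (Fin n × Fin 2) ℂ) :
    Matrix (Fin n) (Fin n) ℂ :=
  Matrix.of fun a b => ∑ y : Fin 2, ρ (a, y) (b, y)

/-- The channel `Ψ(ρ) = ⟨0|(Φ⊗Tr)(ρ)|0⟩·μ_Q + ⟨1|(Φ⊗Tr)(ρ)|1⟩·|⊥⟩⟨⊥|` on `L(H ⊗ Q)` with
values in `L(Q_⊥)`, where `Q_⊥ = ℂ³` has basis `|0⟩, |1⟩, |⊥⟩` and `μ_Q = I/2` on the span of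
`|0⟩, |1⟩`. -/
noncomputable def PsiCh {n : ℕ} (Φ : Matrix (Fin n) (Fin n) ℂ → Matrix (Fin 2) (Fin 2) ℂ)
    (ρ : Matrix (Fin n × Fin 2) (Fin n × Fin 2) ℂ) : Matrix (Fin 3) (Fin 3) ℂ :=
  Matrix.diagonal ![Φ (trQ ρ) 0 0 / 2, Φ (trQ ρ) 0 0 / 2, Φ (trQ ρ) 1 1]

lemma aux_diag_nonneg {κ : Type*} [Fintype κ] [DecidableEq κ] {M : Matrix κ κ ℂ}
    (h : M.PosSemidef) (i : κ) : 0 ≤ M i i := by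
  exact h.diag_nonneg

lemma trQ_kron {n : ℕ} (ρ : Matrix (Fin n) (Fin n) ℂ) (σ : Matrix (Fin 2) (Fin 2) ℂ)
    (hσ : σ.trace = 1) : trQ (ρ ⊗ₖ σ) = ρ := by
  ext a b
  simp only [trQ, Matrix.of_apply, Matrix.kroneckerMap_apply]
  rw [← Finset.mul_sum]
  have : ∑ y : Fin 2, σ y y = σ.trace := rfl
  rw [this, hσ, mul_one]

set_option maxHeartbeats 1000000 in
lemma phi_psd_trace {n : ℕ} (Φ : Matrix (Fin n) (Fin n) ℂ → Matrix (Fin 2) (Fin 2) ℂ)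
    (hΦ : IsCPTP Φ) (ρ : Matrix (Fin n) (Fin n) ℂ) (hρ : IsDensity ρ) :
    (Φ ρ).PosSemidef ∧ (Φ ρ).trace = 1 := by
  obtain ⟨r, K, hK, hK1⟩ := hΦ
  constructor
  · rw [hK]
    apply Finset.sum_induction _ Matrix.PosSemidef
      (fun a b ha hb => ha.add hb) (Matrix.PosSemidef.zero)
    intro i _
    exact hρ.1.mul_mul_conjTranspose_same (K i)
  · rw [hK, Matrix.trace_sum]
    have : ∀ i, (K i * ρ * (K i)ᴴ).trace = ((K i)ᴴ * K i * ρ).trace := by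
      intro i
      rw [Matrix.trace_mul_cycle, Matrix.mul_assoc]
    rw [Finset.sum_congr rfl fun i _ => this i, ← Matrix.trace_sum, ← Matrix.sum_mul, hK1,
      Matrix.one_mul, hρ.2]


/-- For any density `ρ` on `H` and qubit states `σ, σ'`:
`Tr(Ψ(ρ⊗σ)Ψ(ρ⊗σ')) = (1/2)(1 − ⟨1|Φ(ρ)|1⟩)² + ⟨1|Φ(ρ)|1⟩²`; in particular the overlap is
`≥ 19/32` when `⟨1|Φ(ρ)|1⟩ ≥ 3/4`, and `≤ 1/2` when `⟨1|Φ(ρ)|1⟩ ≤ 2/3`. -/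
theorem PsiCh_overlap {n : ℕ}
    (Φ : Matrix (Fin n) (Fin n) ℂ → Matrix (Fin 2) (Fin 2) ℂ) (hΦ : IsCPTP Φ)
    (ρ : Matrix (Fin n) (Fin n) ℂ) (σ σ' : Matrix (Fin 2) (Fin 2) ℂ)
    (hρ : IsDensity ρ) (hσ : IsDensity σ) (hσ' : IsDensity σ') :
    ((PsiCh Φ (ρ ⊗ₖ σ) * PsiCh Φ (ρ ⊗ₖ σ')).trace).re
        = (1 / 2) * (1 - (Φ ρ 1 1).re) ^ 2 + ((Φ ρ 1 1).re) ^ 2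
    ∧ ((3 / 4 : ℝ) ≤ (Φ ρ 1 1).re →
        (19 / 32 : ℝ) ≤ ((PsiCh Φ (ρ ⊗ₖ σ) * PsiCh Φ (ρ ⊗ₖ σ')).trace).re)
    ∧ ((Φ ρ 1 1).re ≤ 2 / 3 →
        ((PsiCh Φ (ρ ⊗ₖ σ) * PsiCh Φ (ρ ⊗ₖ σ')).trace).re ≤ 1 / 2) := by
  obtain ⟨hpsd, htr⟩ := phi_psd_trace Φ hΦ ρ hρ
  have h0 := aux_diag_nonneg hpsd 0
  have h1 := aux_diag_nonneg hpsd 1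
  rw [Complex.nonneg_iff] at h0 h1
  have hsum : Φ ρ 0 0 + Φ ρ 1 1 = 1 := by
    have : (Φ ρ).trace = Φ ρ 0 0 + Φ ρ 1 1 := by
      simp [Matrix.trace, Matrix.diag, Fin.sum_univ_two]
    rw [this] at htr; exact htr
  have hre : (Φ ρ 0 0).re = 1 - (Φ ρ 1 1).re := by
    have := congrArg Complex.re hsum
    simp [Complex.add_re] at this
    linarith
  have key : ((PsiCh Φ (ρ ⊗ₖ σ) * PsiCh Φ (ρ ⊗ₖ σ')).trace).re
      = (1 / 2) * (1 - (Φ ρ 1 1).re) ^ 2 + ((Φ ρ 1 1).re) ^ 2 := by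
    rw [PsiCh, PsiCh, trQ_kron ρ σ hσ.2, trQ_kron ρ σ' hσ'.2,
      Matrix.diagonal_mul_diagonal, Matrix.trace_diagonal]
    rw [Fin.sum_univ_three]
    simp only [Matrix.cons_val_zero, Matrix.cons_val_one, Matrix.head_cons,
      Matrix.cons_val_two, Matrix.tail_cons]
    have e0 : (Φ ρ 0 0 / 2 * (Φ ρ 0 0 / 2)).re = (Φ ρ 0 0).re ^ 2 / 4 := by
      rw [Complex.mul_re]
      simp [Complex.div_re, ← h0.2]
      ring
    have e1 : (Φ ρ 1 1 * Φ ρ 1 1).re = (Φ ρ 1 1).re ^ 2 := by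
      rw [Complex.mul_re, ← h1.2]
      ring
    rw [Complex.add_re, Complex.add_re, e0, e1, hre]
    ring
  refine ⟨key, ?_, ?_⟩
  · intro h; rw [key]; nlinarith
  · intro h; rw [key]; nlinarith [h1.1]
end

section
/- Let |ψ₁⟩,…,|ψ_k⟩ be unit vectors in a finite-dimensional Hilbert space H and let Ψ be the dim H × k matrix with these columns. Then there exists a matrix Ψ' with orthonormal columns such that ‖Ψ − Ψ'‖₂² ≤ Σ_{i≠j} |⟨ψᵢ|ψⱼ⟩|², where ‖·‖₂ is the Frobenius norm. -/
open Matrix BigOperators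

set_option maxHeartbeats 1000000 in
/-- Orthogonal Procrustes bound: for unit vectors `|ψ₁⟩,…,|ψ_k⟩` in `ℂⁿ` (with `k ≤ n`),
assembled as the columns of a matrix `Ψ`, there is a matrix `Ψ'` with orthonormal columns
such that `‖Ψ − Ψ'‖₂² ≤ Σ_{i≠j} |⟨ψᵢ|ψⱼ⟩|²`. -/
theorem procrustes_bound {n k : ℕ} (hkn : k ≤ n) (ψ : Fin k → Fin n → ℂ)
    (hψ : ∀ i, star (ψ i) ⬝ᵥ ψ i = 1) :
    ∃ Ψ' : Matrix (Fin n) (Fin k) ℂ, Ψ'ᴴ * Ψ' = 1 ∧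
      ((((Matrix.of fun a i => ψ i a) - Ψ')ᴴ * ((Matrix.of fun a i => ψ i a) - Ψ')).trace).re
        ≤ ∑ i, ∑ j, if i ≠ j then Complex.normSq (star (ψ i) ⬝ᵥ ψ j) else 0 := by
  classical
  set Ψm : Matrix (Fin n) (Fin k) ℂ := Matrix.of fun a i => ψ i a with hΨm
  set A : Matrix (Fin k) (Fin k) ℂ := Ψmᴴ * Ψm with hAdef
  have hA : A.IsHermitian := Matrix.isHermitian_conjTranspose_mul_self Ψm
  set μ := hA.eigenvalues with hμdef
  have hμ0 : ∀ i, 0 ≤ μ i := Matrix.eigenvalues_conjTranspose_mul_self_nonneg Ψm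
  set V : Matrix (Fin k) (Fin k) ℂ := (hA.eigenvectorUnitary : Matrix (Fin k) (Fin k) ℂ) with hVdef
  have hV1 : Vᴴ * V = 1 := by
    have := hA.eigenvectorUnitary.2
    rw [Matrix.mem_unitaryGroup_iff'] at this
    simpa [Matrix.star_eq_conjTranspose] using this
  have hV2 : V * Vᴴ = 1 := by
    have := hA.eigenvectorUnitary.2
    rw [Matrix.mem_unitaryGroup_iff] at this
    simpa [Matrix.star_eq_conjTranspose] using this
  have hspec : A = V * Matrix.diagonal (RCLike.ofReal ∘ μ) * Vᴴ := by
    simpa [Matrix.star_eq_conjTranspose] using hA.spectral_theorem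
  set W : Matrix (Fin n) (Fin k) ℂ := Ψm * V with hWdef
  have hWW : Wᴴ * W = Matrix.diagonal (fun i => (μ i : ℂ)) := by
    rw [hWdef, conjTranspose_mul, Matrix.mul_assoc, ← Matrix.mul_assoc Ψmᴴ, ← hAdef, hspec]
    calc Vᴴ * (V * Matrix.diagonal (RCLike.ofReal ∘ μ) * Vᴴ * V)
        = (Vᴴ * V) * Matrix.diagonal (RCLike.ofReal ∘ μ) * (Vᴴ * V) := by
          simp only [Matrix.mul_assoc]
      _ = Matrix.diagonal (fun i => (μ i : ℂ)) := by rw [hV1]; simp [Function.comp]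
  -- columns of W as Euclidean vectors
  set w : Fin k → EuclideanSpace ℂ (Fin n) := fun j => WithLp.toLp 2 (fun a => W a j) with hwdef
  have hinner : ∀ i j, (inner ℂ (w i) (w j) : ℂ) = (Wᴴ * W) i j := by
    intro i j
    simp [PiLp.inner_apply, hwdef, Matrix.mul_apply, Matrix.conjTranspose_apply,
      RCLike.inner_apply, mul_comm]
  have hwinner : ∀ i j, (inner ℂ (w i) (w j) : ℂ) = if i = j then (μ i : ℂ) else 0 := by
    intro i j
    rw [hinner, hWW, Matrix.diagonal_apply]
  -- normalized columns
  set f : Fin k → EuclideanSpace ℂ (Fin n) :=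
    fun j => ((Real.sqrt (μ j))⁻¹ : ℂ) • w j with hfdef
  set s : Set (Fin n) := {i | ∃ h : (i : ℕ) < k, μ ⟨i, h⟩ ≠ 0} with hsdef
  set v : Fin n → EuclideanSpace ℂ (Fin n) :=
    fun i => if h : (i : ℕ) < k then f ⟨i, h⟩ else 0 with hvdef
  have hvon : Orthonormal ℂ (s.restrict v) := by
    rw [orthonormal_iff_ite]
    rintro ⟨i, hi, hμi⟩ ⟨j, hj, hμj⟩
    have hvi : v i = f ⟨i, hi⟩ := by simp [hvdef, hi]
    have hvj : v j = f ⟨j, hj⟩ := by simp [hvdef, hj]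
    show inner ℂ (v i) (v j) = _
    simp only [Set.restrict_apply, hvi, hvj, hfdef]
    rw [inner_smul_left, inner_smul_right, hwinner]
    by_cases hij : (⟨i, hi⟩ : Fin k) = ⟨j, hj⟩
    · have hij' : i = j := by
        have := congrArg Fin.val hij; exact Fin.ext this
      have : (⟨i, Set.mem_setOf_eq ▸ ⟨hi, hμi⟩⟩ : s) = ⟨j, ⟨hj, hμj⟩⟩ :=
        Subtype.ext hij'
      rw [if_pos hij, this, if_pos rfl]
      rw [← hij]
      have h1 : Real.sqrt (μ ⟨i, hi⟩) ≠ 0 := by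
        simpa [Real.sqrt_eq_zero'] using lt_of_le_of_ne (hμ0 _) (Ne.symm hμi)
      have h1' : ((Real.sqrt (μ ⟨i, hi⟩) : ℝ) : ℂ) ≠ 0 := Complex.ofReal_ne_zero.mpr h1
      rw [map_inv₀, Complex.conj_ofReal]
      rw [show ((μ (⟨i, hi⟩ : Fin k) : ℝ) : ℂ)
            = (Real.sqrt (μ ⟨i, hi⟩) : ℂ) * (Real.sqrt (μ ⟨i, hi⟩) : ℂ) by
          rw [← Complex.ofReal_mul, Real.mul_self_sqrt (hμ0 _)]]
      field_simp
    · have : (⟨i, ⟨hi, hμi⟩⟩ : s) ≠ ⟨j, ⟨hj, hμj⟩⟩ := by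
        intro hc
        have hij2 : i = j := Subtype.ext_iff.mp hc
        apply hij
        ext
        simpa using congrArg Fin.val hij2
      rw [if_neg hij, if_neg this]
      simp
  -- extend to an orthonormal basis
  obtain ⟨b, hb⟩ := hvon.exists_orthonormalBasis_extension_of_card_eq (by simp)
  set U : Matrix (Fin n) (Fin k) ℂ := Matrix.of fun a j => b (Fin.castLE hkn j) a with hUdef
  have hbU : ∀ i j : Fin k, (inner ℂ (b (Fin.castLE hkn i)) (b (Fin.castLE hkn j)) : ℂ)
      = (Uᴴ * U) i j := by
    intro i j
    simp [PiLp.inner_apply, hUdef, Matrix.mul_apply, Matrix.conjTranspose_apply,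
      RCLike.inner_apply, mul_comm]
  have hUU : Uᴴ * U = 1 := by
    ext i j
    rw [← hbU, orthonormal_iff_ite.mp b.orthonormal]
    have : Fin.castLE hkn i = Fin.castLE hkn j ↔ i = j := by
      constructor
      · intro h; ext; simpa using congrArg Fin.val h
      · intro h; rw [h]
    simp [Matrix.one_apply, this]
  have hcol : ∀ j : Fin k, (inner ℂ (b (Fin.castLE hkn j)) (w j) : ℂ)
      = ((Real.sqrt (μ j) : ℝ) : ℂ) := by
    intro j
    by_cases hμj : μ j = 0
    · have hwj : w j = 0 := by
        have h0 : (inner ℂ (w j) (w j) : ℂ) = 0 := by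
          rw [hwinner, if_pos rfl, hμj, Complex.ofReal_zero]
        exact inner_self_eq_zero.mp h0
      rw [hwj, inner_zero_right, hμj, Real.sqrt_zero, Complex.ofReal_zero]
    · have hjlt : ((Fin.castLE hkn j : Fin n) : ℕ) < k := by simpa using j.isLt
      have hjeq : (⟨((Fin.castLE hkn j : Fin n) : ℕ), hjlt⟩ : Fin k) = j := by ext; simp
      have hmem : (Fin.castLE hkn j : Fin n) ∈ s := ⟨hjlt, by rw [hjeq]; exact hμj⟩
      rw [hb _ hmem]
      have hveq : v (Fin.castLE hkn j) = f j := by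
        rw [hvdef]
        simp only
        rw [dif_pos hjlt, hjeq]
      rw [hveq, hfdef]
      simp only
      rw [inner_smul_left, hwinner, if_pos rfl, map_inv₀, Complex.conj_ofReal]
      have h1 : Real.sqrt (μ j) ≠ 0 := by
        simpa [Real.sqrt_eq_zero'] using lt_of_le_of_ne (hμ0 _) (Ne.symm hμj)
      have h1' : ((Real.sqrt (μ j) : ℝ) : ℂ) ≠ 0 := Complex.ofReal_ne_zero.mpr h1
      rw [show ((μ j : ℝ) : ℂ) = (Real.sqrt (μ j) : ℂ) * (Real.sqrt (μ j) : ℂ) by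
        rw [← Complex.ofReal_mul, Real.mul_self_sqrt (hμ0 _)]]
      field_simp
  have hUnit : (U * Vᴴ)ᴴ * (U * Vᴴ) = 1 := by
    rw [conjTranspose_mul, conjTranspose_conjTranspose, Matrix.mul_assoc,
      ← Matrix.mul_assoc Uᴴ, hUU, Matrix.one_mul, hV2]
  -- trace computations
  have htr1 : ((U * Vᴴ)ᴴ * Ψm).trace = ((∑ j, Real.sqrt (μ j) : ℝ) : ℂ) := by
    rw [conjTranspose_mul, conjTranspose_conjTranspose, Matrix.mul_assoc,
      Matrix.trace_mul_comm V (Uᴴ * Ψm), Matrix.mul_assoc, ← hWdef]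
    rw [Matrix.trace]
    push_cast
    apply Finset.sum_congr rfl
    intro j _
    rw [← hcol j]
    simp [Matrix.diag, Matrix.mul_apply, Matrix.conjTranspose_apply, hUdef, hwdef,
      PiLp.inner_apply, RCLike.inner_apply, mul_comm]
  have hAentry : ∀ i j, A i j = star (ψ i) ⬝ᵥ ψ j := by
    intro i j
    simp [hAdef, Matrix.mul_apply, Matrix.conjTranspose_apply, dotProduct, hΨm]
  have hdiag1 : ∀ i : Fin k, A i i = 1 := fun i => (hAentry i i).trans (hψ i)
  have htrA : A.trace = (k : ℂ) := by
    simp [Matrix.trace, Matrix.diag, hdiag1]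
  have htrdiag : A.trace = ((∑ i, μ i : ℝ) : ℂ) := by
    rw [hspec, Matrix.trace_mul_cycle, hV1, Matrix.one_mul, Matrix.trace_diagonal]
    simp [Function.comp]
  have hsumμ : ∑ i, μ i = (k : ℝ) := by
    have := htrdiag ▸ htrA
    exact_mod_cast this
  have htrAA : (A * A).trace = ((∑ i, (μ i)^2 : ℝ) : ℂ) := by
    rw [hspec]
    rw [show V * Matrix.diagonal (RCLike.ofReal ∘ μ) * Vᴴ *
          (V * Matrix.diagonal (RCLike.ofReal ∘ μ) * Vᴴ)
        = V * (Matrix.diagonal (RCLike.ofReal ∘ μ) * ((Vᴴ * V) *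
            Matrix.diagonal (RCLike.ofReal ∘ μ))) * Vᴴ by
      simp only [Matrix.mul_assoc]]
    rw [hV1, Matrix.one_mul, Matrix.diagonal_mul_diagonal,
      Matrix.trace_mul_cycle, hV1, Matrix.one_mul, Matrix.trace_diagonal]
    push_cast [Function.comp]
    exact Finset.sum_congr rfl fun i _ => by rw [sq]; rfl
  -- RHS identity
  have hAA : ∀ i : Fin k, (A * A) i i = ((∑ j, Complex.normSq (A i j) : ℝ) : ℂ) := by
    intro i
    rw [Matrix.mul_apply]
    push_cast
    apply Finset.sum_congr rfl
    intro j _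
    have hsym : A j i = (starRingEnd ℂ) (A i j) := by
      conv_lhs => rw [← hA.eq]
      rw [Matrix.conjTranspose_apply]
      rfl
    rw [hsym, Complex.mul_conj]
  have hRHS : ∑ i, ∑ j, (if i ≠ j then Complex.normSq (star (ψ i) ⬝ᵥ ψ j) else 0)
      = (∑ i, (μ i)^2) - k := by
    have hsummand : ∀ i j : Fin k, (if i ≠ j then Complex.normSq (star (ψ i) ⬝ᵥ ψ j) else 0)
        = Complex.normSq (A i j) - (if i = j then Complex.normSq (A i j) else 0) := by
      intro i j
      rw [hAentry]
      by_cases h : i = j <;> simp [h]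
    simp only [hsummand]
    rw [Finset.sum_congr rfl (fun i _ => Finset.sum_sub_distrib _ _)]
    have hin : ∀ i : Fin k, ∑ j, (if i = j then Complex.normSq (A i j) else 0)
        = Complex.normSq (A i i) := by
      intro i
      simp
    have hnorm : ∑ i, ∑ j, Complex.normSq (A i j) = ∑ i, (μ i)^2 := by
      have h2 : ((A * A).trace).re = ∑ i, (μ i)^2 := by rw [htrAA, Complex.ofReal_re]
      rw [← h2, Matrix.trace]
      rw [Complex.re_sum]
      apply Finset.sum_congr rfl
      intro i _
      rw [Matrix.diag, hAA, Complex.ofReal_re]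
    rw [Finset.sum_sub_distrib, hnorm]
    congr 1
    simp only [hin]
    have : ∀ i : Fin k, Complex.normSq (A i i) = 1 := fun i => by
      rw [hdiag1]; simp
    simp [this]
  -- LHS trace
  set S : ℝ := ∑ j, Real.sqrt (μ j) with hSdef
  have hexp : (Ψm - U * Vᴴ)ᴴ * (Ψm - U * Vᴴ)
      = Ψmᴴ * Ψm - Ψmᴴ * (U * Vᴴ) - (U * Vᴴ)ᴴ * Ψm + (U * Vᴴ)ᴴ * (U * Vᴴ) := by
    rw [conjTranspose_sub, Matrix.sub_mul, Matrix.mul_sub, Matrix.mul_sub]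
    abel
  have htr2 : (Ψmᴴ * (U * Vᴴ)).trace = (S : ℂ) := by
    have : Ψmᴴ * (U * Vᴴ) = ((U * Vᴴ)ᴴ * Ψm)ᴴ := by
      rw [conjTranspose_mul, conjTranspose_conjTranspose]
    rw [this, Matrix.trace_conjTranspose, htr1]
    exact Complex.conj_ofReal _
  have hLHS : (((Ψm - U * Vᴴ)ᴴ * (Ψm - U * Vᴴ)).trace).re = 2 * k - 2 * S := by
    rw [hexp, Matrix.trace_add, Matrix.trace_sub, Matrix.trace_sub, ← hAdef, htrA,
      htr2, htr1, hUnit, Matrix.trace_one]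
    push_cast
    simp
    ring
  refine ⟨U * Vᴴ, hUnit, ?_⟩
  rw [hLHS, hRHS, ← hsumμ, hSdef]
  rw [Finset.mul_sum, Finset.mul_sum, ← Finset.sum_sub_distrib, ← Finset.sum_sub_distrib]
  apply Finset.sum_le_sum
  intro i _
  have ht0 : 0 ≤ Real.sqrt (μ i) := Real.sqrt_nonneg _
  have ht2 : Real.sqrt (μ i) ^ 2 = μ i := Real.sq_sqrt (hμ0 i)
  nlinarith [mul_nonneg (mul_nonneg ht0 (sq_nonneg (Real.sqrt (μ i) - 1)))
    (by positivity : (0:ℝ) ≤ Real.sqrt (μ i) + 2)]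
end
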